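/- arXiv:2502.01381 — 4 statements merged into one kernel-verified Lean document; each statement's English description precedes it below -/
import Mathlib

section
/- Let σ ≥ 0 and suppose there exists a nonempty set S ⊆ V with ∑_{i=1}^r m(S, G_i) ≥ σ|S|, and let γ* = min{ Δ(S, 𝒢) : S ⊆ V nonempty, ∑_{i=1}^r m(S, G_i) ≥ σ|S| }. If γ > γ* and S₀ minimizes S ↦ b(S, 𝒢) − γ|S| over all S ⊆ V with ∑_{i=1}^r m(S, G_i) ≥ σ|S|, then S₀ ≠ ∅ and Δ(S₀, 𝒢) < γ. -/
/-- Number of edges of `G` with both endpoints in `S`. -/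
noncomputable def edgeCnt {V : Type*} (G : SimpleGraph V) (S : Finset V) : ℕ :=
  {e ∈ G.edgeSet | ∀ v ∈ e, v ∈ S}.ncard

/-- Density of the subgraph induced by `S` in `G`. -/
noncomputable def dens {V : Type*} (G : SimpleGraph V) (S : Finset V) : ℝ :=
  (edgeCnt G S : ℝ) / (S.card : ℝ)

/-- Total density across the graph snapshots. -/
noncomputable def densTot {V : Type*} {r : ℕ} (G : Fin r → SimpleGraph V) (S : Finset V) : ℝ :=
  ∑ i, dens (G i) S

/-- Difference between the maximum and minimum induced density. -/
noncomputable def densDiff {V : Type*} {r : ℕ} (G : Fin r → SimpleGraph V) (S : Finset V) : ℝ :=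
  (⨆ i, dens (G i) S) - (⨅ i, dens (G i) S)

/-- Difference between the maximum and minimum induced edge count. -/
noncomputable def edgeDiff {V : Type*} {r : ℕ} (G : Fin r → SimpleGraph V) (S : Finset V) : ℝ :=
  (⨆ i, (edgeCnt (G i) S : ℝ)) - (⨅ i, (edgeCnt (G i) S : ℝ))

lemma ciSup_div_pos {ι : Type*} [Nonempty ι] [Finite ι] (f : ι → ℝ) (c : ℝ) (hc : 0 < c) :
    ⨆ i, f i / c = (⨆ i, f i) / c := by
  obtain ⟨j, hj⟩ := Finite.exists_max f
  have h1 : ⨆ i, f i = f j :=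
    le_antisymm (ciSup_le hj) (le_ciSup (Finite.bddAbove_range f) j)
  have h2 : ⨆ i, f i / c = f j / c :=
    le_antisymm (ciSup_le fun i => by gcongr; exact hj i)
      (le_ciSup (Finite.bddAbove_range (fun i => f i / c)) j)
  rw [h1, h2]

lemma ciInf_div_pos {ι : Type*} [Nonempty ι] [Finite ι] (f : ι → ℝ) (c : ℝ) (hc : 0 < c) :
    ⨅ i, f i / c = (⨅ i, f i) / c := by
  obtain ⟨j, hj⟩ := Finite.exists_min f
  have h1 : ⨅ i, f i = f j :=
    le_antisymm (ciInf_le (Finite.bddBelow_range f) j) (le_ciInf hj)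
  have h2 : ⨅ i, f i / c = f j / c :=
    le_antisymm (ciInf_le (Finite.bddBelow_range (fun i => f i / c)) j)
      (le_ciInf fun i => by gcongr; exact hj i)
  rw [h1, h2]

lemma densDiff_eq {V : Type*} {r : ℕ} (hr : 1 ≤ r) (G : Fin r → SimpleGraph V)
    (S : Finset V) (hS : S.Nonempty) :
    densDiff G S = edgeDiff G S / (S.card : ℝ) := by
  have : Nonempty (Fin r) := ⟨⟨0, hr⟩⟩
  have hc : (0 : ℝ) < S.card := by exact_mod_cast hS.card_pos
  unfold densDiff edgeDiff dens
  rw [ciSup_div_pos _ _ hc, ciInf_div_pos _ _ hc, sub_div]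

lemma edgeCnt_empty {V : Type*} (G : SimpleGraph V) : edgeCnt G (∅ : Finset V) = 0 := by
  unfold edgeCnt
  have h : {e ∈ G.edgeSet | ∀ v ∈ e, v ∈ (∅ : Finset V)} = ∅ := by
    ext e
    simp only [Set.mem_sep_iff, Set.mem_empty_iff_false, iff_false, not_and]
    intro _ h
    exact absurd (h e.out.1 (Sym2.out_fst_mem e)) (by simp)
  rw [h, Set.ncard_empty]

lemma edgeDiff_empty {V : Type*} {r : ℕ} (hr : 1 ≤ r) (G : Fin r → SimpleGraph V) :
    edgeDiff G (∅ : Finset V) = 0 := by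
  have : Nonempty (Fin r) := ⟨⟨0, hr⟩⟩
  unfold edgeDiff
  simp [edgeCnt_empty]

theorem stmt3 {V : Type*} [Fintype V] {r : ℕ} (hr : 1 ≤ r)
    (G : Fin r → SimpleGraph V) (σ γ γstar : ℝ) (hσ : 0 ≤ σ)
    (hex : ∃ S : Finset V, S.Nonempty ∧ σ * (S.card : ℝ) ≤ ∑ i, (edgeCnt (G i) S : ℝ))
    (hstar : IsLeast
      {x : ℝ | ∃ S : Finset V, S.Nonempty ∧
        σ * (S.card : ℝ) ≤ (∑ i, (edgeCnt (G i) S : ℝ)) ∧ densDiff G S = x}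
      γstar)
    (hγ : γstar < γ)
    (S₀ : Finset V) (hfeas : σ * (S₀.card : ℝ) ≤ ∑ i, (edgeCnt (G i) S₀ : ℝ))
    (hmin : ∀ S : Finset V, σ * (S.card : ℝ) ≤ (∑ i, (edgeCnt (G i) S : ℝ)) →
      edgeDiff G S₀ - γ * (S₀.card : ℝ) ≤ edgeDiff G S - γ * (S.card : ℝ)) :
    S₀.Nonempty ∧ densDiff G S₀ < γ := by
  obtain ⟨Sst, hSne, hSf, hSdd⟩ := hstar.1
  have hcst : (0 : ℝ) < Sst.card := by exact_mod_cast hSne.card_pos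
  have hdd : densDiff G Sst = edgeDiff G Sst / Sst.card := densDiff_eq hr G Sst hSne
  have hEst : edgeDiff G Sst = γstar * Sst.card := by
    have := hdd
    rw [hSdd] at this
    field_simp at this
    linarith
  have hlt : edgeDiff G S₀ - γ * S₀.card < 0 := by
    have := hmin Sst hSf
    rw [hEst] at this
    nlinarith
  have hS₀ne : S₀.Nonempty := by
    by_contra h
    rw [Finset.not_nonempty_iff_eq_empty] at h
    subst h
    rw [edgeDiff_empty hr G] at hlt
    simp at hlt
  refine ⟨hS₀ne, ?_⟩
  have hc0 : (0 : ℝ) < S₀.card := by exact_mod_cast hS₀ne.card_pos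
  rw [densDiff_eq hr G S₀ hS₀ne, div_lt_iff₀ hc0]
  linarith
end

section
/- Let α ≥ 0 and suppose there exists a nonempty set S ⊆ V with b(S, 𝒢) ≤ α|S|; let γ* = max{ d(S, 𝒢) : S ⊆ V nonempty, b(S, 𝒢) ≤ α|S| }. If 0 < ε ≤ 1/(r n³), 0 ≤ L < γ* ≤ (1 + ε)L, and S₀ maximizes S ↦ ∑_{i=1}^r m(S, G_i) − L|S| over all S ⊆ V with b(S, 𝒢) ≤ α|S|, then d(S₀, 𝒢) = γ*. -/
lemma edgeCnt_le {V : Type*} (G : SimpleGraph V) (S : Finset V) :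
    edgeCnt G S ≤ S.card * S.card := by
  unfold edgeCnt
  have h := Set.ncard_le_ncard_of_injOn (s := {e ∈ G.edgeSet | ∀ v ∈ e, v ∈ S})
      (t := ((S ×ˢ S : Finset (V × V)) : Set (V × V)))
      (fun e => Quot.out e)
      (fun e he => by
        simp only [Set.mem_setOf_eq] at he
        simp only [Finset.coe_product, Set.mem_prod]
        exact ⟨he.2 _ (Sym2.out_fst_mem e), he.2 _ (Sym2.out_snd_mem e)⟩)
      (fun a _ b _ hab => by
        have h2 := congrArg (Quot.mk (Sym2.Rel V)) hab
        rwa [Quot.out_eq, Quot.out_eq] at h2)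
      ((S ×ˢ S).finite_toSet)
  rwa [Set.ncard_coe_finset, Finset.card_product] at h

lemma densTot_eq {V : Type*} {r : ℕ} (G : Fin r → SimpleGraph V) (S : Finset V) :
    densTot G S = (∑ i, (edgeCnt (G i) S : ℝ)) / (S.card : ℝ) := by
  simp [densTot, dens, Finset.sum_div]

lemma spacing (a b s t : ℕ) (hs : 0 < s) (ht : 0 < t)
    (h : (a : ℝ) / s ≠ (b : ℝ) / t) :
    1 / ((s : ℝ) * t) ≤ |(a : ℝ) / s - (b : ℝ) / t| := by
  have hs' : (0:ℝ) < s := by exact_mod_cast hs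
  have ht' : (0:ℝ) < t := by exact_mod_cast ht
  have key : (a : ℝ) / s - (b : ℝ) / t
      = (((a * t : ℤ) - (b * s : ℤ) : ℤ) : ℝ) / ((s : ℝ) * t) := by
    push_cast
    field_simp
  have hne : ((a * t : ℤ) - (b * s : ℤ)) ≠ 0 := by
    intro h0
    apply h
    have h2 : (a : ℝ) * t = (b : ℝ) * s := by exact_mod_cast sub_eq_zero.mp h0
    rw [div_eq_div_iff hs'.ne' ht'.ne']
    linarith
  have h1 : (1 : ℝ) ≤ |(((a * t : ℤ) - (b * s : ℤ) : ℤ) : ℝ)| := by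
    exact_mod_cast Int.one_le_abs hne
  rw [key, abs_div, abs_of_pos (by positivity : (0:ℝ) < (s:ℝ) * t)]
  gcongr

set_option maxHeartbeats 1000000 in
theorem stmt7 {V : Type*} [Fintype V] {r : ℕ} (hr : 1 ≤ r)
    (G : Fin r → SimpleGraph V) (α ε L γstar : ℝ) (hα : 0 ≤ α)
    (hε0 : 0 < ε) (hε : ε ≤ 1 / ((r : ℝ) * (Fintype.card V : ℝ) ^ 3))
    (hex : ∃ S : Finset V, S.Nonempty ∧ edgeDiff G S ≤ α * (S.card : ℝ))
    (hstar : IsGreatest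
      {x : ℝ | ∃ S : Finset V, S.Nonempty ∧ edgeDiff G S ≤ α * (S.card : ℝ) ∧ densTot G S = x}
      γstar)
    (hL0 : 0 ≤ L) (hL : L < γstar) (hU : γstar ≤ (1 + ε) * L)
    (S₀ : Finset V) (hfeas : edgeDiff G S₀ ≤ α * (S₀.card : ℝ))
    (hmax : ∀ S : Finset V, edgeDiff G S ≤ α * (S.card : ℝ) →
      (∑ i, (edgeCnt (G i) S : ℝ)) - L * (S.card : ℝ) ≤
        (∑ i, (edgeCnt (G i) S₀ : ℝ)) - L * (S₀.card : ℝ)) :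
    densTot G S₀ = γstar := by
  classical
  set n : ℕ := Fintype.card V with hn
  have hr' : (0:ℝ) < r := by exact_mod_cast hr
  have hn0 : 0 < n := by
    rcases Nat.eq_zero_or_pos n with h0 | h
    · rw [h0] at hε
      norm_num at hε
      linarith
    · exact h
  have hn' : (0:ℝ) < n := by exact_mod_cast hn0
  obtain ⟨T, hTne, hTfeas, hTd⟩ := hstar.1
  have hcT : 0 < T.card := Finset.card_pos.mpr hTne
  have hcT' : (0:ℝ) < T.card := by exact_mod_cast hcT
  have hMT : (∑ i, (edgeCnt (G i) T : ℝ)) = γstar * T.card := by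
    rw [densTot_eq] at hTd
    field_simp at hTd
    linarith
  have h0 := hmax T hTfeas
  -- S₀ is nonempty
  have hS0ne : S₀.Nonempty := by
    by_contra hc
    rw [Finset.not_nonempty_iff_eq_empty] at hc
    subst hc
    simp only [edgeCnt_empty, Finset.card_empty, Nat.cast_zero, Nat.cast_ofNat,
      Finset.sum_const_zero, mul_zero, sub_zero] at h0
    nlinarith
  have hc0 : 0 < S₀.card := Finset.card_pos.mpr hS0ne
  have hc0' : (0:ℝ) < S₀.card := by exact_mod_cast hc0
  -- upper bound from maximality of γstar
  have hle : densTot G S₀ ≤ γstar := hstar.2 ⟨S₀, hS0ne, hfeas, rfl⟩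
  -- lower bound: densTot G S₀ ≥ L
  have hd0 : densTot G S₀ = (∑ i, (edgeCnt (G i) S₀ : ℝ)) / (S₀.card : ℝ) := densTot_eq G S₀
  have hMS0 : L * (S₀.card : ℝ) ≤ ∑ i, (edgeCnt (G i) S₀ : ℝ) := by nlinarith
  have hdL : L ≤ densTot G S₀ := by
    rw [hd0, le_div_iff₀ hc0']
    linarith
  -- γstar ≤ r * n
  have hcTn : (T.card : ℝ) ≤ n := by exact_mod_cast Finset.card_le_univ T
  have hMTle : (∑ i, (edgeCnt (G i) T : ℝ)) ≤ (r : ℝ) * ((T.card : ℝ) * n) := by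
    calc (∑ i, (edgeCnt (G i) T : ℝ)) ≤ ∑ _i : Fin r, (T.card : ℝ) * n := by
          apply Finset.sum_le_sum
          intro i _
          have h1 : (edgeCnt (G i) T : ℝ) ≤ (T.card : ℝ) * T.card := by
            exact_mod_cast edgeCnt_le (G i) T
          nlinarith
      _ = (r : ℝ) * ((T.card : ℝ) * n) := by simp [Finset.sum_const, mul_comm]
  have hγrn : γstar ≤ (r : ℝ) * n := by nlinarith
  -- the gap is small
  have hgap : γstar - densTot G S₀ < 1 / (n : ℝ)^2 := by
    have h1 : γstar - densTot G S₀ ≤ ε * L := by nlinarith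
    have h2 : ε * L < ε * γstar := by nlinarith
    have h3 : ε * γstar ≤ ε * ((r:ℝ) * n) := by nlinarith
    have h4 : ε * ((r:ℝ) * n) ≤ (1 / ((r : ℝ) * (n : ℝ) ^ 3)) * ((r:ℝ) * n) := by
      apply mul_le_mul_of_nonneg_right hε
      positivity
    have h5 : (1 / ((r : ℝ) * (n : ℝ) ^ 3)) * ((r:ℝ) * n) = 1 / (n:ℝ)^2 := by
      field_simp
    linarith
  by_contra hne
  -- spacing between distinct density values
  have hcast0 : ((∑ i, edgeCnt (G i) S₀ : ℕ) : ℝ) = ∑ i, (edgeCnt (G i) S₀ : ℝ) := by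
    push_cast; rfl
  have hcastT : ((∑ i, edgeCnt (G i) T : ℕ) : ℝ) = ∑ i, (edgeCnt (G i) T : ℝ) := by
    push_cast; rfl
  have hTd' : (∑ i, (edgeCnt (G i) T : ℝ)) / (T.card : ℝ) = γstar := by
    rw [← densTot_eq]; exact hTd
  have hsp := spacing (∑ i, edgeCnt (G i) S₀) (∑ i, edgeCnt (G i) T) S₀.card T.card hc0 hcT
    (by rw [hcast0, hcastT, ← hd0, hTd']; exact hne)
  rw [hcast0, hcastT, ← hd0, hTd'] at hsp
  rw [abs_of_nonpos (by linarith)] at hsp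
  have hprod : 1 / (n:ℝ)^2 ≤ 1 / ((S₀.card : ℝ) * T.card) := by
    apply one_div_le_one_div_of_le (by positivity)
    have hc0n : (S₀.card : ℝ) ≤ n := by exact_mod_cast Finset.card_le_univ S₀
    nlinarith
  linarith
end

section
/- Suppose V is nonempty and let γ* = max{ min_{1 ≤ i ≤ r} d(S, G_i) : S ⊆ V nonempty }. If 0 ≤ γ < γ* and S₀ maximizes S ↦ min_{1 ≤ i ≤ r} m(S, G_i) − γ|S| over all subsets S ⊆ V, then S₀ ≠ ∅ and min_{1 ≤ i ≤ r} d(S₀, G_i) > γ. -/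
lemma iInf_div_const {r : ℕ} [Nonempty (Fin r)] (f : Fin r → ℝ) {c : ℝ} (hc : 0 < c) :
    (⨅ i, f i / c) = (⨅ i, f i) / c := by
  apply le_antisymm
  · obtain ⟨i, hi⟩ := exists_eq_ciInf_of_finite (f := f)
    calc (⨅ i, f i / c) ≤ f i / c := ciInf_le (Set.Finite.bddBelow (Set.finite_range _)) i
    _ = (⨅ i, f i) / c := by rw [hi]
  · obtain ⟨i, hi⟩ := exists_eq_ciInf_of_finite (f := fun i => f i / c)
    rw [← hi]
    gcongr
    exact ciInf_le (Set.Finite.bddBelow (Set.finite_range _)) i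

theorem stmt12 {V : Type*} [Fintype V] [Nonempty V] {r : ℕ} (hr : 1 ≤ r)
    (G : Fin r → SimpleGraph V) (γ γstar : ℝ)
    (hstar : IsGreatest
      {x : ℝ | ∃ S : Finset V, S.Nonempty ∧ (⨅ i, dens (G i) S) = x} γstar)
    (hγ0 : 0 ≤ γ) (hγ : γ < γstar)
    (S₀ : Finset V)
    (hmax : ∀ S : Finset V,
      (⨅ i, (edgeCnt (G i) S : ℝ)) - γ * (S.card : ℝ) ≤
        (⨅ i, (edgeCnt (G i) S₀ : ℝ)) - γ * (S₀.card : ℝ)) :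
    S₀.Nonempty ∧ γ < ⨅ i, dens (G i) S₀ := by
  haveI : Nonempty (Fin r) := Fin.pos_iff_nonempty.mp hr
  obtain ⟨Sst, hSst, hval⟩ := hstar.1
  have hcardst : (0:ℝ) < (Sst.card : ℝ) := by
    exact_mod_cast Finset.card_pos.mpr hSst
  have hMst : (⨅ i, (edgeCnt (G i) Sst : ℝ)) = γstar * Sst.card := by
    have := iInf_div_const (fun i => (edgeCnt (G i) Sst : ℝ)) hcardst
    simp only [dens] at hval
    rw [this] at hval
    field_simp at hval ⊢
    linarith [hval]
  have hpos : 0 < (⨅ i, (edgeCnt (G i) S₀ : ℝ)) - γ * (S₀.card : ℝ) := by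
    have h1 := hmax Sst
    rw [hMst] at h1
    nlinarith
  have hne : S₀.Nonempty := by
    rcases Finset.eq_empty_or_nonempty S₀ with h | h
    · exfalso
      rw [h] at hpos
      simp only [edgeCnt_empty, Nat.cast_zero, Finset.card_empty, mul_zero, sub_zero] at hpos
      rw [ciInf_const] at hpos
      exact lt_irrefl _ hpos
    · exact h
  refine ⟨hne, ?_⟩
  have hcard : (0:ℝ) < (S₀.card : ℝ) := by exact_mod_cast Finset.card_pos.mpr hne
  have : (⨅ i, dens (G i) S₀) = (⨅ i, (edgeCnt (G i) S₀ : ℝ)) / S₀.card := by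
    simp only [dens]
    exact iInf_div_const _ hcard
  rw [this, lt_div_iff₀ hcard]
  linarith
end

section
/- Suppose V is nonempty, ε > 0, and let γ* = max{ min_{1 ≤ i ≤ r} d(S, G_i) : S ⊆ V nonempty }. If 0 ≤ L < γ* ≤ (1 + ε)L and S₀ maximizes S ↦ min_{1 ≤ i ≤ r} m(S, G_i) − L|S| over all subsets S ⊆ V, then min_{1 ≤ i ≤ r} d(S₀, G_i) ≥ γ*/(1 + ε). -/
lemma helperMin {ι : Type*} [Finite ι] [Nonempty ι] (f : ι → ℝ) :
    ∃ i, (⨅ j, f j) = f i ∧ ∀ j, f i ≤ f j := by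
  obtain ⟨i, hi⟩ := Finite.exists_min f
  exact ⟨i, le_antisymm (ciInf_le (Finite.bddBelow_range f) i) (le_ciInf hi), hi⟩

lemma densInf {V : Type*} {r : ℕ} [Nonempty (Fin r)] (G : Fin r → SimpleGraph V)
    (S : Finset V) :
    ∃ i, (⨅ j, dens (G j) S) = dens (G i) S ∧
      (⨅ j, (edgeCnt (G j) S : ℝ)) = edgeCnt (G i) S := by
  obtain ⟨i, hieq, himin⟩ := helperMin (fun j => (edgeCnt (G j) S : ℝ))
  refine ⟨i, le_antisymm (ciInf_le (Finite.bddBelow_range _) i) (le_ciInf fun j => ?_), hieq⟩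
  unfold dens
  exact div_le_div_of_nonneg_right (himin j) (Nat.cast_nonneg _)

theorem stmt13 {V : Type*} [Fintype V] [Nonempty V] {r : ℕ} (hr : 1 ≤ r)
    (G : Fin r → SimpleGraph V) (ε L γstar : ℝ) (hε : 0 < ε)
    (hstar : IsGreatest
      {x : ℝ | ∃ S : Finset V, S.Nonempty ∧ (⨅ i, dens (G i) S) = x} γstar)
    (hL0 : 0 ≤ L) (hL : L < γstar) (hU : γstar ≤ (1 + ε) * L)
    (S₀ : Finset V)
    (hmax : ∀ S : Finset V,
      (⨅ i, (edgeCnt (G i) S : ℝ)) - L * (S.card : ℝ) ≤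
        (⨅ i, (edgeCnt (G i) S₀ : ℝ)) - L * (S₀.card : ℝ)) :
    γstar / (1 + ε) ≤ ⨅ i, dens (G i) S₀ := by
  haveI : Nonempty (Fin r) := Fin.pos_iff_nonempty.mp hr
  obtain ⟨S, hSne, hSd⟩ := hstar.1
  have hScard : (0:ℝ) < S.card := by exact_mod_cast hSne.card_pos
  obtain ⟨i1, hd1, he1⟩ := densInf G S
  -- infimum of edge counts on S equals γstar * |S|
  have hmS : (⨅ j, (edgeCnt (G j) S : ℝ)) = γstar * S.card := by
    rw [he1]
    have : dens (G i1) S = γstar := by rw [← hd1, hSd]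
    rw [← this]
    unfold dens
    rw [div_mul_cancel₀ _ hScard.ne']
  -- objective at S is at least γstar - L
  have hobjS : γstar - L ≤ (⨅ j, (edgeCnt (G j) S : ℝ)) - L * S.card := by
    rw [hmS]
    have h1 : (1:ℝ) ≤ S.card := by exact_mod_cast hSne.card_pos
    nlinarith [hL]
  have hobj0 : γstar - L ≤ (⨅ j, (edgeCnt (G j) S₀ : ℝ)) - L * S₀.card :=
    le_trans hobjS (hmax S)
  -- S₀ is nonempty
  have hS0ne : S₀.Nonempty := by
    by_contra h
    rw [Finset.not_nonempty_iff_eq_empty] at h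
    subst h
    simp only [edgeCnt_empty, Finset.card_empty, Nat.cast_zero, mul_zero, sub_zero,
      ciInf_const] at hobj0
    linarith
  have hS0card : (0:ℝ) < S₀.card := by exact_mod_cast hS0ne.card_pos
  obtain ⟨i0, hd0, he0⟩ := densInf G S₀
  -- min density on S₀ is at least L
  have hdL : L ≤ ⨅ j, dens (G j) S₀ := by
    rw [hd0]
    unfold dens
    rw [le_div_iff₀ hS0card, ← he0]
    nlinarith [hobj0, hL]
  calc γstar / (1 + ε) ≤ L := by
        rw [div_le_iff₀ (by linarith)]
        linarith [hU]
    _ ≤ _ := hdL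
end
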